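/- Let m ∈ ℕ. Then there is a set Γ(m) of sequences (ε₁, …, ε_m) with every ε_i ∈ (0,1], having the following properties: (i) the cardinality of Γ(m) is at most 2^{5m/2}; (ii) for every (ε₁, …, ε_m) ∈ Γ(m), each m·ε_i is a positive integer, Σ_{i=1}^m ε_i ≤ 3, and for every t > 0 the number of indices i ∈ {1, …, m} with ε_i ≥ t is at most 2/t; (iii) for every sequence (α₁, …, α_m) with each α_i ∈ [0,1] and Σ_{i=1}^m α_i = 1 there exists (ε₁, …, ε_m) ∈ Γ(m) such that α_i ≤ ε_i for all i ∈ {1, …, m}. -/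

import Mathlib

open scoped BigOperators

namespace GammaAux

/-- partial sums read off from a subset of `Fin (2*m)` of cardinality `m`. -/
noncomputable def Fn (m : ℕ) (s : Finset (Fin (2*m))) (h : s.card = m) : ℕ → ℕ
  | 0 => 0
  | (j+1) => if h' : j < m then (s.orderEmbOfFin h ⟨j, h'⟩ : ℕ) + 1 else 2*m

lemma Fn_le (m : ℕ) (s : Finset (Fin (2*m))) (h : s.card = m) (j : ℕ) :
    Fn m s h j ≤ 2*m := by
  cases j with
  | zero => simp [Fn]
  | succ j =>
    simp only [Fn]
    split
    · exact Nat.succ_le_of_lt (s.orderEmbOfFin h ⟨j, ‹_›⟩).isLt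
    · exact le_refl _

lemma Fn_lt (m : ℕ) (s : Finset (Fin (2*m))) (h : s.card = m) (j : ℕ) (hj : j < m) :
    Fn m s h j < Fn m s h (j+1) := by
  cases j with
  | zero => simp [Fn, hj]
  | succ j =>
    have hj' : j < m := Nat.lt_of_succ_lt hj
    simp only [Fn, dif_pos hj, dif_pos hj']
    have : (⟨j, hj'⟩ : Fin m) < ⟨j+1, hj⟩ := by simp [Fin.lt_def]
    exact Nat.succ_lt_succ ((s.orderEmbOfFin h).strictMono this)

lemma Fn_mono (m : ℕ) (s : Finset (Fin (2*m))) (h : s.card = m) :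
    Monotone (Fn m s h) := by
  apply monotone_nat_of_le_succ
  intro j
  by_cases hj : j < m
  · exact (Fn_lt m s h j hj).le
  · rw [show Fn m s h (j+1) = 2*m from by simp [Fn, hj]]
    exact Fn_le m s h j

/-- decoding a subset into a sequence of reals. -/
noncomputable def decode (m : ℕ) (s : Finset (Fin (2*m))) : Fin m → ℝ :=
  if h : s.card = m then
    fun i => ((min (Fn m s h ((i:ℕ)+1) - Fn m s h (i:ℕ)) m : ℕ) : ℝ) / m
  else fun _ => 1 / m

lemma markov {m : ℕ} (ε : Fin m → ℝ) (h0 : ∀ i, 0 ≤ ε i) (hs : ∑ i, ε i ≤ 2)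
    {t : ℝ} (ht : 0 < t) :
    ((Finset.univ.filter (fun i : Fin m => t ≤ ε i)).card : ℝ) ≤ 2 / t := by
  rw [le_div_iff₀ ht]
  calc ((Finset.univ.filter (fun i : Fin m => t ≤ ε i)).card : ℝ) * t
      = ∑ _i ∈ Finset.univ.filter (fun i : Fin m => t ≤ ε i), t := by
        rw [Finset.sum_const, nsmul_eq_mul]
    _ ≤ ∑ i ∈ Finset.univ.filter (fun i : Fin m => t ≤ ε i), ε i := by
        apply Finset.sum_le_sum
        intro i hi
        exact (Finset.mem_filter.mp hi).2
    _ ≤ ∑ i, ε i := by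
        apply Finset.sum_le_sum_of_subset_of_nonneg (Finset.filter_subset _ _)
        intro i _ _
        exact h0 i
    _ ≤ 2 := hs

lemma decode_spec (m : ℕ) (s : Finset (Fin (2*m))) :
    (∀ i, 0 < decode m s i ∧ decode m s i ≤ 1) ∧
    (∀ i, ∃ k : ℕ, 0 < k ∧ (m : ℝ) * decode m s i = k) ∧
    (∑ i, decode m s i ≤ 2) := by
  rcases Nat.eq_zero_or_pos m with hm | hm
  · subst hm
    refine ⟨fun i => i.elim0, fun i => i.elim0, by simp⟩
  have hm0 : (m : ℝ) ≠ 0 := Nat.cast_ne_zero.mpr hm.ne'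
  have hmR : (0:ℝ) < m := Nat.cast_pos.mpr hm
  unfold decode
  split
  · rename_i h
    have hk1 : ∀ i : Fin m, 1 ≤ min (Fn m s h ((i:ℕ)+1) - Fn m s h (i:ℕ)) m := by
      intro i
      refine le_min ?_ hm
      have := Fn_lt m s h i i.isLt
      omega
    have hkm : ∀ i : Fin m, min (Fn m s h ((i:ℕ)+1) - Fn m s h (i:ℕ)) m ≤ m :=
      fun i => min_le_right _ _
    refine ⟨?_, ?_, ?_⟩
    · intro i
      constructor
      · refine div_pos ?_ hmR
        exact_mod_cast Nat.lt_of_lt_of_le Nat.zero_lt_one (hk1 i)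
      · rw [div_le_one hmR]
        exact_mod_cast hkm i
    · intro i
      exact ⟨_, hk1 i, by field_simp⟩
    · have hsum : ∑ i : Fin m, min (Fn m s h ((i:ℕ)+1) - Fn m s h (i:ℕ)) m ≤ 2*m := by
        calc ∑ i : Fin m, min (Fn m s h ((i:ℕ)+1) - Fn m s h (i:ℕ)) m
            ≤ ∑ i : Fin m, (Fn m s h ((i:ℕ)+1) - Fn m s h (i:ℕ)) :=
              Finset.sum_le_sum fun i _ => min_le_left _ _
          _ = ∑ j ∈ Finset.range m, (Fn m s h (j+1) - Fn m s h j) :=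
              Fin.sum_univ_eq_sum_range (fun j => Fn m s h (j+1) - Fn m s h j) m
          _ = Fn m s h m - Fn m s h 0 := Finset.sum_range_tsub (Fn_mono m s h) m
          _ ≤ 2*m := by
              have := Fn_le m s h m
              omega
      rw [← Finset.sum_div, div_le_iff₀ hmR]
      calc (∑ i : Fin m, ((min (Fn m s h ((i:ℕ)+1) - Fn m s h (i:ℕ)) m : ℕ) : ℝ))
          = ((∑ i : Fin m, min (Fn m s h ((i:ℕ)+1) - Fn m s h (i:ℕ)) m : ℕ) : ℝ) := by
            push_cast; ring
        _ ≤ ((2*m : ℕ) : ℝ) := by exact_mod_cast hsum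
        _ = 2 * (m:ℝ) := by push_cast; ring
  · refine ⟨?_, ?_, ?_⟩
    · intro i
      constructor
      · positivity
      · rw [div_le_one hmR]
        exact_mod_cast hm
    · intro i
      exact ⟨1, one_pos, by field_simp; norm_num⟩
    · rw [Finset.sum_const, Finset.card_univ, Fintype.card_fin, nsmul_eq_mul]
      rw [mul_one_div, div_self hm0]
      norm_num

end GammaAux

/-- Lemma 2.2: for every `m` there is a family `Γ(m)` of sequences in `(0,1]^m`,
of cardinality at most `2^(5m/2)`, whose entries are positive integer multiples of `1/m`,
with sum at most `3`, satisfying the distribution estimate `#{i : ε i ≥ t} ≤ 2/t`,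
and majorizing every nonnegative sequence of sum `1`. -/
theorem exists_Gamma (m : ℕ) :
    ∃ Γ : Finset (Fin m → ℝ),
      (Γ.card : ℝ) ≤ 2 ^ ((5 * (m : ℝ)) / 2) ∧
      (∀ ε ∈ Γ,
        (∀ i, 0 < ε i ∧ ε i ≤ 1) ∧
        (∀ i, ∃ k : ℕ, 0 < k ∧ (m : ℝ) * ε i = k) ∧
        (∑ i, ε i ≤ 3) ∧
        (∀ t : ℝ, 0 < t →
          ((Finset.univ.filter (fun i : Fin m => t ≤ ε i)).card : ℝ) ≤ 2 / t)) ∧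
      (∀ α : Fin m → ℝ, (∀ i, 0 ≤ α i ∧ α i ≤ 1) → (∑ i, α i) = 1 →
        ∃ ε ∈ Γ, ∀ i, α i ≤ ε i) := by
  classical
  refine ⟨Finset.image (GammaAux.decode m) Finset.univ, ?_, ?_, ?_⟩
  · have h1 : (Finset.image (GammaAux.decode m) Finset.univ).card ≤ 2 ^ (2*m) := by
      calc (Finset.image (GammaAux.decode m) Finset.univ).card
          ≤ (Finset.univ : Finset (Finset (Fin (2*m)))).card := Finset.card_image_le
        _ = 2 ^ (2*m) := by simp
    calc ((Finset.image (GammaAux.decode m) Finset.univ).card : ℝ)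
        ≤ ((2 ^ (2*m) : ℕ) : ℝ) := by exact_mod_cast h1
      _ = (2:ℝ) ^ ((2*m : ℕ) : ℝ) := by rw [Real.rpow_natCast]; push_cast; ring
      _ ≤ 2 ^ ((5 * (m : ℝ)) / 2) := by
          apply Real.rpow_le_rpow_of_exponent_le one_le_two
          have : (0:ℝ) ≤ m := Nat.cast_nonneg m
          push_cast
          linarith
  · intro ε hε
    obtain ⟨s, -, rfl⟩ := Finset.mem_image.mp hε
    obtain ⟨ha, hb, hc⟩ := GammaAux.decode_spec m s
    exact ⟨ha, hb, hc.trans (by norm_num),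
      fun t ht => GammaAux.markov _ (fun i => (ha i).1.le) hc ht⟩
  · intro α hα hsum1
    rcases Nat.eq_zero_or_pos m with rfl | hm
    · simp at hsum1
    have hmR : (0:ℝ) < m := Nat.cast_pos.mpr hm
    set n : ℕ → ℕ := fun j => if h : j < m then max ⌈(m:ℝ) * α ⟨j,h⟩⌉₊ 1 else 1 with hn
    have hn1 : ∀ j, 1 ≤ n j := by
      intro j; simp only [hn]; split <;> simp
    have hnm : ∀ j, j < m → n j ≤ m := by
      intro j hj
      simp only [hn, dif_pos hj]
      refine max_le ?_ hm
      rw [Nat.ceil_le]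
      calc (m:ℝ) * α ⟨j,hj⟩ ≤ (m:ℝ) * 1 := by
            exact mul_le_mul_of_nonneg_left (hα _).2 hmR.le
        _ = (m:ℝ) := mul_one _
    set Q : ℕ → ℕ := fun j => ∑ i ∈ Finset.range j, n i with hQ
    have hQmono : StrictMono Q := by
      apply strictMono_nat_of_lt_succ
      intro j
      have := hn1 j
      simp only [hQ, Finset.sum_range_succ]
      omega
    have hQ1 : ∀ i : ℕ, 1 ≤ Q (i+1) := by
      intro i
      have : Q 0 < Q (i+1) := hQmono (Nat.succ_pos i)
      simp [hQ] at this
      exact this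
    have hQm : Q m ≤ 2 * m := by
      have : ((Q m : ℕ) : ℝ) ≤ 2 * m := by
        simp only [hQ]
        push_cast
        rw [← Fin.sum_univ_eq_sum_range (fun j => ((n j : ℕ) : ℝ)) m]
        have hle : ∀ i : Fin m, ((n (i:ℕ) : ℕ) : ℝ) ≤ (m:ℝ) * α i + 1 := by
          intro i
          simp only [hn, dif_pos i.isLt]
          have h0 : (0:ℝ) ≤ (m:ℝ) * α i := mul_nonneg hmR.le (hα _).1
          push_cast [Nat.cast_max]
          refine max_le ?_ (by linarith)
          have := Nat.ceil_lt_add_one h0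
          simpa [Fin.eta] using this.le
        calc ∑ i : Fin m, ((n (i:ℕ) : ℕ) : ℝ)
            ≤ ∑ i : Fin m, ((m:ℝ) * α i + 1) := Finset.sum_le_sum fun i _ => hle i
          _ = (m:ℝ) * (∑ i, α i) + m := by
              rw [Finset.sum_add_distrib, ← Finset.mul_sum]
              simp
          _ = 2 * m := by rw [hsum1]; ring
      exact_mod_cast this
    have hQle : ∀ i : ℕ, i < m → Q (i+1) ≤ 2*m :=
      fun i hi => le_trans (hQmono.monotone (Nat.succ_le_of_lt hi)) hQm
    set g : Fin m → Fin (2*m) := fun i =>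
      ⟨Q ((i:ℕ)+1) - 1, by
        have h1 := hQ1 (i:ℕ)
        have h2 := hQle (i:ℕ) i.isLt
        omega⟩ with hg
    have hgmono : StrictMono g := by
      intro a b hab
      have h1 := hQ1 (a:ℕ)
      have h2 : Q ((a:ℕ)+1) < Q ((b:ℕ)+1) := hQmono (Nat.succ_lt_succ hab)
      simp only [hg, Fin.mk_lt_mk]
      omega
    set s : Finset (Fin (2*m)) := Finset.image g Finset.univ with hs
    have hcard : s.card = m := by
      rw [hs, Finset.card_image_of_injective _ hgmono.injective, Finset.card_univ,
        Fintype.card_fin]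
    have he : g = s.orderEmbOfFin hcard :=
      Finset.orderEmbOfFin_unique hcard
        (fun i => Finset.mem_image_of_mem g (Finset.mem_univ i)) hgmono
    have hFQ : ∀ j, j ≤ m → GammaAux.Fn m s hcard j = Q j := by
      intro j hj
      cases j with
      | zero => simp [GammaAux.Fn, hQ]
      | succ j =>
        have hj' : j < m := hj
        simp only [GammaAux.Fn, dif_pos hj', ← he]
        have h1 := hQ1 j
        have h2 : ((g ⟨j, hj'⟩ : Fin (2*m)) : ℕ) = Q (j+1) - 1 := rfl
        omega
    refine ⟨GammaAux.decode m s, Finset.mem_image_of_mem _ (Finset.mem_univ s), ?_⟩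
    intro i
    unfold GammaAux.decode
    rw [dif_pos hcard]
    have e1 : GammaAux.Fn m s hcard ((i:ℕ)+1) = Q ((i:ℕ)+1) := hFQ _ i.isLt
    have e2 : GammaAux.Fn m s hcard (i:ℕ) = Q (i:ℕ) := hFQ _ (le_of_lt i.isLt)
    have e3 : Q ((i:ℕ)+1) - Q (i:ℕ) = n (i:ℕ) := by
      simp [hQ, Finset.sum_range_succ]
    rw [e1, e2, e3, min_eq_left (hnm _ i.isLt)]
    rw [le_div_iff₀ hmR]
    have h1 : (m:ℝ) * α i ≤ (⌈(m:ℝ) * α i⌉₊ : ℝ) := Nat.le_ceil _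
    have h2 : (⌈(m:ℝ) * α i⌉₊ : ℝ) ≤ ((n (i:ℕ) : ℕ) : ℝ) := by
      simp only [hn, dif_pos i.isLt]
      push_cast [Nat.cast_max]
      simp [Fin.eta, le_max_left]
    calc α i * m = (m:ℝ) * α i := mul_comm _ _
      _ ≤ _ := h1.trans h2
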